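/- For q ∈ {1,2} and s ∈ {0,1,2} define the complex number R(q,s) := i^{−3} · e^{πiq(3−2s)/3} · exp( (π/6)·∑_{l=1}^{2} e^{2πilq/3}·cot³(πl/3) ) · exp( −(π/6)·∑_{l=1}^{2} cot³(πl/3) ). Then for every q ∈ {1,2} and every s ∈ {0,1,2}, R(q,s) ≠ 1 and R(q,s) ≠ −1 (equivalently, R(q,s)² ≠ 1). -/

import Mathlib

open Complex Real Finset

/-- The ratio `R(q,s)` of the refined analytic torsion and the cohomological Turaev
torsion (up to sign) of the lens space `L(3;1,1,1)`. -/
noncomputable def lensRatio (q s : ℕ) : ℂ :=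
  Complex.I ^ (-3 : ℤ) *
    Complex.exp (Real.pi * Complex.I * (q : ℂ) * (3 - 2 * (s : ℂ)) / 3) *
    Complex.exp ((Real.pi / 6 : ℂ) *
      ∑ l ∈ Finset.Icc (1 : ℕ) 2,
        Complex.exp (2 * Real.pi * Complex.I * (l : ℂ) * (q : ℂ) / 3) *
          (Real.cot (Real.pi * (l : ℝ) / 3) : ℂ) ^ 3) *
    Complex.exp (-(Real.pi / 6 : ℂ) *
      ∑ l ∈ Finset.Icc (1 : ℕ) 2, (Real.cot (Real.pi * (l : ℝ) / 3) : ℂ) ^ 3)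

lemma my_cot1 : Real.cot (Real.pi * 1 / 3) = Real.sqrt 3 / 3 := by
  have h : Real.pi * 1 / 3 = Real.pi / 3 := by ring
  rw [h, Real.cot_eq_cos_div_sin, Real.cos_pi_div_three, Real.sin_pi_div_three]
  have h3 : Real.sqrt 3 * Real.sqrt 3 = 3 := Real.mul_self_sqrt (by norm_num)
  have hp : Real.sqrt 3 > 0 := Real.sqrt_pos.2 (by norm_num)
  field_simp
  rw [Real.sq_sqrt (by norm_num)]

lemma my_cot2 : Real.cot (Real.pi * 2 / 3) = -(Real.sqrt 3 / 3) := by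
  have h : Real.pi * 2 / 3 = Real.pi - Real.pi / 3 := by ring
  rw [h, Real.cot_eq_cos_div_sin, Real.cos_pi_sub, Real.sin_pi_sub,
    Real.cos_pi_div_three, Real.sin_pi_div_three]
  have h3 : Real.sqrt 3 * Real.sqrt 3 = 3 := Real.mul_self_sqrt (by norm_num)
  have hp : Real.sqrt 3 > 0 := Real.sqrt_pos.2 (by norm_num)
  field_simp
  rw [Real.sq_sqrt (by norm_num)]

lemma my_cexp (x : ℝ) : Complex.exp ((x : ℂ) * Complex.I)
    = ((Real.cos x : ℝ) : ℂ) + ((Real.sin x : ℝ) : ℂ) * Complex.I := by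
  rw [Complex.exp_mul_I, ← Complex.ofReal_cos, ← Complex.ofReal_sin]

lemma my_c23 : Real.cos (2 * Real.pi / 3) = -(1/2) := by
  rw [show 2 * Real.pi / 3 = Real.pi - Real.pi / 3 by ring, Real.cos_pi_sub,
    Real.cos_pi_div_three]

lemma my_s23 : Real.sin (2 * Real.pi / 3) = Real.sqrt 3 / 2 := by
  rw [show 2 * Real.pi / 3 = Real.pi - Real.pi / 3 by ring, Real.sin_pi_sub,
    Real.sin_pi_div_three]

lemma my_c43 : Real.cos (4 * Real.pi / 3) = -(1/2) := by
  rw [show 4 * Real.pi / 3 = -(2 * Real.pi / 3) + 2 * Real.pi by ring,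
    Real.cos_add_two_pi, Real.cos_neg, my_c23]

lemma my_s43 : Real.sin (4 * Real.pi / 3) = -(Real.sqrt 3 / 2) := by
  rw [show 4 * Real.pi / 3 = -(2 * Real.pi / 3) + 2 * Real.pi by ring,
    Real.sin_add_two_pi, Real.sin_neg, my_s23]

lemma my_c83 : Real.cos (8 * Real.pi / 3) = -(1/2) := by
  rw [show 8 * Real.pi / 3 = 2 * Real.pi / 3 + 2 * Real.pi by ring,
    Real.cos_add_two_pi, my_c23]

lemma my_s83 : Real.sin (8 * Real.pi / 3) = Real.sqrt 3 / 2 := by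
  rw [show 8 * Real.pi / 3 = 2 * Real.pi / 3 + 2 * Real.pi by ring,
    Real.sin_add_two_pi, my_s23]

lemma my_hs3 : ((Real.sqrt 3 : ℝ) : ℂ) ^ 2 = 3 := by
  rw [← Complex.ofReal_pow, Real.sq_sqrt (by norm_num : (3:ℝ) ≥ 0)]
  norm_num

lemma my_icc : Finset.Icc (1 : ℕ) 2 = {1, 2} := rfl

lemma my_sum0 :
    (∑ l ∈ Finset.Icc (1 : ℕ) 2, ((Real.cot (Real.pi * (l : ℝ) / 3) : ℝ) : ℂ) ^ 3) = 0 := by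
  rw [my_icc, Finset.sum_pair (by norm_num)]
  simp only [Nat.cast_one, Nat.cast_ofNat]
  rw [my_cot1, my_cot2]
  push_cast
  ring

lemma my_sum1 :
    (∑ l ∈ Finset.Icc (1 : ℕ) 2,
      Complex.exp (2 * Real.pi * Complex.I * (l : ℂ) * ((1:ℕ) : ℂ) / 3) *
        ((Real.cot (Real.pi * (l : ℝ) / 3) : ℝ) : ℂ) ^ 3) = Complex.I / 3 := by
  rw [my_icc, Finset.sum_pair (by norm_num)]
  simp only [Nat.cast_one, Nat.cast_ofNat]
  rw [my_cot1, my_cot2]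
  rw [show (2 * (Real.pi:ℂ) * Complex.I * 1 * 1 / 3) = ((2 * Real.pi / 3 : ℝ) : ℂ) * Complex.I
      by push_cast; ring,
    show (2 * (Real.pi:ℂ) * Complex.I * 2 * 1 / 3) = ((4 * Real.pi / 3 : ℝ) : ℂ) * Complex.I
      by push_cast; ring,
    my_cexp, my_cexp, my_c23, my_s23, my_c43, my_s43]
  push_cast
  linear_combination (Complex.I * (((Real.sqrt 3 : ℝ):ℂ)^2 + 3) / 27) * my_hs3

lemma my_sum2 :
    (∑ l ∈ Finset.Icc (1 : ℕ) 2,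
      Complex.exp (2 * Real.pi * Complex.I * (l : ℂ) * ((2:ℕ) : ℂ) / 3) *
        ((Real.cot (Real.pi * (l : ℝ) / 3) : ℝ) : ℂ) ^ 3) = -(Complex.I / 3) := by
  rw [my_icc, Finset.sum_pair (by norm_num)]
  simp only [Nat.cast_one, Nat.cast_ofNat]
  rw [my_cot1, my_cot2]
  rw [show (2 * (Real.pi:ℂ) * Complex.I * 1 * 2 / 3) = ((4 * Real.pi / 3 : ℝ) : ℂ) * Complex.I
      by push_cast; ring,
    show (2 * (Real.pi:ℂ) * Complex.I * 2 * 2 / 3) = ((8 * Real.pi / 3 : ℝ) : ℂ) * Complex.I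
      by push_cast; ring,
    my_cexp, my_cexp, my_c43, my_s43, my_c83, my_s83]
  push_cast
  linear_combination (-Complex.I * (((Real.sqrt 3 : ℝ):ℂ)^2 + 3) / 27) * my_hs3

lemma my_Ipow : Complex.I ^ (-3 : ℤ) = Complex.exp ((Real.pi : ℂ) * Complex.I * (1/2)) := by
  have h1 : Complex.I ^ (3:ℕ) = -Complex.I := by
    rw [pow_succ, sq, Complex.I_mul_I]; ring
  have h2 : Complex.I ^ (-3 : ℤ) = Complex.I := by
    rw [show (-3:ℤ) = -(3:ℕ) from rfl, zpow_neg, zpow_natCast, h1]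
    simp [inv_neg, Complex.inv_I]
  rw [h2, show ((Real.pi:ℂ) * Complex.I * (1/2)) = ((Real.pi/2 : ℝ):ℂ) * Complex.I
      by push_cast; ring, my_cexp, Real.cos_pi_div_two, Real.sin_pi_div_two]
  simp

lemma my_lensRatio1 (s : ℕ) :
    lensRatio 1 s = Complex.exp ((Real.pi : ℂ) * Complex.I * (1/2)
      + Real.pi * Complex.I * ((1:ℕ):ℂ) * (3 - 2 * (s : ℂ)) / 3
      + Real.pi * Complex.I / 18) := by
  unfold lensRatio
  rw [my_sum0, my_sum1, my_Ipow, ← Complex.exp_add, ← Complex.exp_add, ← Complex.exp_add]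
  congr 1
  push_cast
  ring

lemma my_lensRatio2 (s : ℕ) :
    lensRatio 2 s = Complex.exp ((Real.pi : ℂ) * Complex.I * (1/2)
      + Real.pi * Complex.I * ((2:ℕ):ℂ) * (3 - 2 * (s : ℂ)) / 3
      - Real.pi * Complex.I / 18) := by
  unfold lensRatio
  rw [my_sum0, my_sum2, my_Ipow, ← Complex.exp_add, ← Complex.exp_add, ← Complex.exp_add]
  congr 1
  push_cast
  ring

lemma my_aux (c : ℝ) (h : ∀ n : ℤ, c ≠ n) :
    Complex.exp ((Real.pi : ℂ) * Complex.I * (c : ℂ)) ≠ 1 ∧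
    Complex.exp ((Real.pi : ℂ) * Complex.I * (c : ℂ)) ≠ -1 := by
  have hπ : (Real.pi : ℂ) ≠ 0 := Complex.ofReal_ne_zero.2 Real.pi_ne_zero
  have hpi : ((Real.pi : ℂ) * Complex.I) ≠ 0 := mul_ne_zero hπ Complex.I_ne_zero
  constructor
  · intro he
    rw [Complex.exp_eq_one_iff] at he
    obtain ⟨n, hn⟩ := he
    have hn' : ((Real.pi:ℂ) * Complex.I) * (c : ℂ) = ((Real.pi:ℂ) * Complex.I) * (2 * n) := by
      linear_combination hn
    have hc : (c : ℂ) = 2 * n := mul_left_cancel₀ hpi hn'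
    exact h (2 * n) (by exact_mod_cast hc)
  · intro he
    have h1 : Complex.exp ((Real.pi:ℂ) * Complex.I * (c:ℂ) + (Real.pi:ℂ) * Complex.I) = 1 := by
      rw [Complex.exp_add, he, Complex.exp_pi_mul_I]; ring
    rw [Complex.exp_eq_one_iff] at h1
    obtain ⟨n, hn⟩ := h1
    have hn' : ((Real.pi:ℂ) * Complex.I) * (c : ℂ)
        = ((Real.pi:ℂ) * Complex.I) * (2 * n - 1) := by linear_combination hn
    have hc : (c : ℂ) = 2 * n - 1 := mul_left_cancel₀ hpi hn'
    exact h (2 * n - 1) (by exact_mod_cast hc)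

lemma my_noint (a : ℤ) (h : ¬ (3 ∣ a)) : ∀ n : ℤ, ((a : ℝ) / 9) ≠ (n : ℝ) := by
  intro n hn
  have h9 : (a : ℝ) = 9 * n := by field_simp at hn; linarith
  have : a = 9 * n := by exact_mod_cast h9
  omega

/-- Subsection 6.8 of the paper: for every `q ∈ {1,2}` and `s ∈ {0,1,2}`,
`R(q,s) ≠ 1` and `R(q,s) ≠ −1`; hence the refined analytic torsion and the
cohomological Turaev torsion of `L(3;1,1,1)` are never equal. -/
theorem stmt_19 :
    ∀ q ∈ ({1, 2} : Finset ℕ), ∀ s ∈ ({0, 1, 2} : Finset ℕ),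
      lensRatio q s ≠ 1 ∧ lensRatio q s ≠ -1 := by
  intro q hq s hs
  fin_cases hq <;> fin_cases hs
  · rw [my_lensRatio1 0, show ((Real.pi : ℂ) * Complex.I * (1/2)
      + Real.pi * Complex.I * ((1:ℕ):ℂ) * (3 - 2 * ((0:ℕ) : ℂ)) / 3
      + Real.pi * Complex.I / 18) = (Real.pi : ℂ) * Complex.I * ((((14:ℤ):ℝ)/9 : ℝ) : ℂ)
      by push_cast; ring]
    exact my_aux _ (my_noint 14 (by decide))
  · rw [my_lensRatio1 1, show ((Real.pi : ℂ) * Complex.I * (1/2)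
      + Real.pi * Complex.I * ((1:ℕ):ℂ) * (3 - 2 * ((1:ℕ) : ℂ)) / 3
      + Real.pi * Complex.I / 18) = (Real.pi : ℂ) * Complex.I * ((((8:ℤ):ℝ)/9 : ℝ) : ℂ)
      by push_cast; ring]
    exact my_aux _ (my_noint 8 (by decide))
  · rw [my_lensRatio1 2, show ((Real.pi : ℂ) * Complex.I * (1/2)
      + Real.pi * Complex.I * ((1:ℕ):ℂ) * (3 - 2 * ((2:ℕ) : ℂ)) / 3
      + Real.pi * Complex.I / 18) = (Real.pi : ℂ) * Complex.I * ((((2:ℤ):ℝ)/9 : ℝ) : ℂ)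
      by push_cast; ring]
    exact my_aux _ (my_noint 2 (by decide))
  · rw [my_lensRatio2 0, show ((Real.pi : ℂ) * Complex.I * (1/2)
      + Real.pi * Complex.I * ((2:ℕ):ℂ) * (3 - 2 * ((0:ℕ) : ℂ)) / 3
      - Real.pi * Complex.I / 18) = (Real.pi : ℂ) * Complex.I * ((((22:ℤ):ℝ)/9 : ℝ) : ℂ)
      by push_cast; ring]
    exact my_aux _ (my_noint 22 (by decide))
  · rw [my_lensRatio2 1, show ((Real.pi : ℂ) * Complex.I * (1/2)
      + Real.pi * Complex.I * ((2:ℕ):ℂ) * (3 - 2 * ((1:ℕ) : ℂ)) / 3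
      - Real.pi * Complex.I / 18) = (Real.pi : ℂ) * Complex.I * ((((10:ℤ):ℝ)/9 : ℝ) : ℂ)
      by push_cast; ring]
    exact my_aux _ (my_noint 10 (by decide))
  · rw [my_lensRatio2 2, show ((Real.pi : ℂ) * Complex.I * (1/2)
      + Real.pi * Complex.I * ((2:ℕ):ℂ) * (3 - 2 * ((2:ℕ) : ℂ)) / 3
      - Real.pi * Complex.I / 18) = (Real.pi : ℂ) * Complex.I * ((((-2:ℤ):ℝ)/9 : ℝ) : ℂ)
      by push_cast; ring]
    exact my_aux _ (my_noint (-2) (by decide))
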